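/- For ζ ∈ ℂ with Re ζ > 0 and |ζ| sufficiently large, the equation ν̃ log ν̃ = ζ has a unique solution ν̃ with Re ν̃ > 1, Re(log ν̃) > 1 and |Im(log ν̃)| < π/2, and this solution satisfies ν̃ = (ζ / log ζ)(1 + O(log log |ζ| / log |ζ|)) as Re ζ → ∞. -/

import Mathlib

open Filter Asymptotics Real
set_option maxHeartbeats 1000000

lemma bsinb_nonneg {b : ℝ} (h1 : -π ≤ b) (h2 : b ≤ π) : 0 ≤ b * Real.sin b := by
  rcases le_or_gt 0 b with h | h
  · exact mul_nonneg h (Real.sin_nonneg_of_nonneg_of_le_pi h h2)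
  · have := Real.sin_nonpos_of_nonpos_of_neg_pi_le h.le h1
    nlinarith

lemma sol_props {w ζ : ℂ} (hw : w ≠ 0) (heq : w * Complex.log w = ζ) (hre : 0 < ζ.re)
    (ha2 : 2 ≤ (Complex.log w).re) :
    1 < w.re ∧ 1 < (Complex.log w).re ∧ |(Complex.log w).im| < Real.pi / 2 := by
  set u := Complex.log w with hu
  set a := u.re with haa
  set b := u.im with hbb
  have hb_pi : -π < b ∧ b ≤ π := by
    rw [hbb, hu, Complex.log_im]
    exact ⟨Complex.neg_pi_lt_arg w, Complex.arg_le_pi w⟩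
  have hwexp : w = Complex.exp u := (Complex.exp_log hw).symm
  have hzre : ζ.re = Real.exp a * Real.cos b * a - Real.exp a * Real.sin b * b := by
    rw [← heq, hwexp, Complex.mul_re, Complex.exp_re, Complex.exp_im]
  have hexp_pos : (0:ℝ) < Real.exp a := Real.exp_pos a
  have hkey : b * Real.sin b < a * Real.cos b := by nlinarith [hre, hzre]
  have hb2 : |b| < π / 2 := by
    by_contra hcon
    push_neg at hcon
    have hcb : Real.cos b ≤ 0 := by
      rw [← Real.cos_abs]
      refine Real.cos_nonpos_of_pi_div_two_le_of_le hcon ?_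
      rw [abs_le] at *
      constructor
      · linarith [hb_pi.1, Real.pi_pos]
      · linarith [hb_pi.2, Real.pi_pos]
    have := bsinb_nonneg hb_pi.1.le hb_pi.2
    nlinarith
  have hbs := bsinb_nonneg hb_pi.1.le hb_pi.2
  have hcos_pos : 0 < Real.cos b := by nlinarith
  have hea : Real.exp 1 * a ≤ Real.exp a := by
    have h1 : a - 1 + 1 ≤ Real.exp (a - 1) := Real.add_one_le_exp (a - 1)
    have h2 : Real.exp a = Real.exp 1 * Real.exp (a - 1) := by
      rw [← Real.exp_add]; ring_nf
    nlinarith [Real.exp_pos (1:ℝ)]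
  have he2 : (2:ℝ) ≤ Real.exp 1 := by
    have := Real.add_one_le_exp (1:ℝ); linarith
  have hwre : w.re = Real.exp a * Real.cos b := by rw [hwexp, Complex.exp_re]
  have h1w : 1 < w.re := by
    rcases le_or_gt (1/2 : ℝ) (Real.cos b) with hc | hc
    · rw [hwre]; nlinarith
    · have hsin2 : Real.sin b ^ 2 > 3/4 := by
        have := Real.sin_sq_add_cos_sq b
        nlinarith [hcos_pos]
      have habs : |Real.sin b| ≤ |b| := Real.abs_sin_le_abs
      have hbsin : 3/4 < b * Real.sin b := by
        have h1 : |Real.sin b| * |Real.sin b| ≤ |b| * |Real.sin b| :=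
          mul_le_mul_of_nonneg_right habs (abs_nonneg _)
        have h2 : b * Real.sin b = |b| * |Real.sin b| := by
          rw [← abs_mul, abs_of_nonneg hbs]
        have h3 : |Real.sin b| * |Real.sin b| = Real.sin b ^ 2 := by
          rw [← abs_mul, ← sq, abs_of_nonneg (sq_nonneg _)]
        nlinarith
      have hcgt : 3/4 < a * Real.cos b := by linarith
      rw [hwre]
      -- w.re = e^a cos b > e^a * (3/(4a)) ≥ e * 3/4 > 1
      have ha0 : (0:ℝ) < a := by linarith
      nlinarith [hea, he2, hexp_pos]
  exact ⟨h1w, by linarith, hb2⟩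

lemma f_inj {w1 w2 : ℂ} (h1 : 1 < w1.re) (h2 : 1 < w2.re)
    (heq : w1 * Complex.log w1 = w2 * Complex.log w2) : w1 = w2 := by
  by_contra hne
  set d := w2 - w1 with hd
  have hd0 : d ≠ 0 := sub_ne_zero.mpr (Ne.symm hne)
  set γ : ℝ → ℂ := fun t => w1 + t • d with hγ
  have hγre : ∀ t ∈ Set.Icc (0:ℝ) 1, 1 < (γ t).re := by
    intro t ht
    simp only [hγ, Complex.add_re, Complex.real_smul, Complex.mul_re,
      Complex.ofReal_re, Complex.ofReal_im]
    have hdre : d.re = w2.re - w1.re := by simp [hd]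
    rcases ht with ⟨ht0, ht1⟩
    nlinarith [mul_nonneg (sub_nonneg.mpr ht1) (by linarith : (0:ℝ) ≤ w1.re - 1),
      mul_nonneg ht0 (by linarith : (0:ℝ) ≤ w2.re - 1)]
  set φ : ℝ → ℝ := fun t => ((starRingEnd ℂ) d * ((γ t) * Complex.log (γ t))).re with hφ
  have hderiv : ∀ t ∈ Set.Icc (0:ℝ) 1,
      HasDerivAt φ (((starRingEnd ℂ) d * ((Complex.log (γ t) + 1) * d)).re) t := by
    intro t ht
    have hre := hγre t ht
    have hslit : γ t ∈ Complex.slitPlane := Or.inl (by linarith)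
    have hne0 : γ t ≠ 0 := Complex.slitPlane_ne_zero hslit
    have hγd : HasDerivAt γ d t := (((hasDerivAt_id t).smul_const d).const_add w1).congr_deriv (one_smul _ _)
    have hfw : HasDerivAt (fun w : ℂ => w * Complex.log w) (Complex.log (γ t) + 1) (γ t) := by
      have := (hasDerivAt_id' (γ t)).mul (Complex.hasDerivAt_log hslit)
      simpa [mul_inv_cancel₀ hne0, add_comm, Pi.mul_def] using this
    have hcomp : HasDerivAt (fun t => (γ t) * Complex.log (γ t))
        ((Complex.log (γ t) + 1) * d) t := by
      have := (hfw.hasFDerivAt.restrictScalars ℝ).comp_hasDerivAt t hγd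
      simpa [mul_comm, Function.comp_def] using this
    have hmul : HasDerivAt (fun t => (starRingEnd ℂ) d * ((γ t) * Complex.log (γ t)))
        ((starRingEnd ℂ) d * ((Complex.log (γ t) + 1) * d)) t := hcomp.const_mul _
    exact (Complex.reCLM.hasFDerivAt.comp_hasDerivAt t hmul)
  have hpos : ∀ t ∈ Set.Icc (0:ℝ) 1,
      0 < ((starRingEnd ℂ) d * ((Complex.log (γ t) + 1) * d)).re := by
    intro t ht
    have hre := hγre t ht
    have hne0 : γ t ≠ 0 := by
      intro h; rw [h] at hre; simp at hre; linarith
    have harr : (starRingEnd ℂ) d * ((Complex.log (γ t) + 1) * d)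
        = (Complex.log (γ t) + 1) * (Complex.normSq d : ℂ) := by
      rw [← Complex.mul_conj]
      ring
    rw [harr, Complex.mul_re]
    simp only [Complex.ofReal_re, Complex.ofReal_im, mul_zero, sub_zero]
    have hlogre : 0 < (Complex.log (γ t) + 1).re := by
      simp only [Complex.add_re, Complex.one_re, Complex.log_re]
      have habs : 1 < ‖γ t‖ := lt_of_lt_of_le hre (Complex.re_le_norm _)
      have := Real.log_pos habs
      linarith
    have hnsq : 0 < Complex.normSq d := Complex.normSq_pos.mpr hd0
    positivity
  have hmono : StrictMonoOn φ (Set.Icc 0 1) := by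
    apply strictMonoOn_of_deriv_pos (convex_Icc 0 1)
    · intro t ht
      exact ((hderiv t ht).continuousAt).continuousWithinAt
    · intro t ht
      rw [interior_Icc] at ht
      have ht' : t ∈ Set.Icc (0:ℝ) 1 := ⟨ht.1.le, ht.2.le⟩
      rw [(hderiv t ht').deriv]
      exact hpos t ht'
  have h01 : φ 0 < φ 1 := hmono (by norm_num) (by norm_num) (by norm_num)
  have hγ0 : γ 0 = w1 := by simp [hγ]
  have hγ1 : γ 1 = w2 := by simp [hγ, hd]
  rw [hφ] at h01
  simp only [hγ0, hγ1] at h01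
  rw [heq] at h01
  exact lt_irrefl _ h01

lemma log_le_div16 {a : ℝ} (ha : 1024 ≤ a) : Real.log a ≤ a / 16 := by
  have h0 : (0:ℝ) ≤ a := by linarith
  have hs : (32:ℝ) ≤ Real.sqrt a := by
    have : Real.sqrt 1024 ≤ Real.sqrt a := Real.sqrt_le_sqrt ha
    rwa [show (1024:ℝ) = 32^2 by norm_num, Real.sqrt_sq (by norm_num)] at this
  have h1 : Real.log (Real.sqrt a) ≤ Real.sqrt a := by
    have := Real.log_le_sub_one_of_pos (show (0:ℝ) < Real.sqrt a by linarith)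
    linarith
  have h2 : Real.log a = 2 * Real.log (Real.sqrt a) := by
    rw [Real.log_sqrt h0]; ring
  have hsq : Real.sqrt a * Real.sqrt a = a := Real.mul_self_sqrt h0
  nlinarith

lemma exists_sol (ζ : ℂ) (hT : Real.exp (Real.exp 100) ≤ ‖ζ‖) (hre : 0 < ζ.re) :
    ∃ w : ℂ, w * Complex.log w = ζ ∧ 2 ≤ (Complex.log w).re ∧
      ‖w - ζ / Complex.log ζ‖ ≤
        ‖ζ / Complex.log ζ‖ *
          (8 * Real.log (Real.log (‖ζ‖)) / Real.log (‖ζ‖)) := by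
  set A := ‖ζ‖ with hAdef
  set a := Real.log A with hadef
  set L := Complex.log ζ with hLdef
  set z0 := ζ / L with hz0def
  set ε := 8 * Real.log a / a with hεdef
  set r := ‖z0‖ * ε with hrdef
  -- basic positivity
  have hA0 : (0:ℝ) < A := lt_of_lt_of_le (Real.exp_pos _) hT
  have hζ0 : ζ ≠ 0 := by
    intro h
    rw [hAdef, h, norm_zero] at hA0
    exact lt_irrefl _ hA0
  have ha : Real.exp 100 ≤ a := by
    calc Real.exp 100 = Real.log (Real.exp (Real.exp 100)) := (Real.log_exp _).symm
      _ ≤ a := Real.log_le_log (Real.exp_pos _) hT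
  have ha1024 : (1024:ℝ) ≤ a := by
    have h50 : (51:ℝ) ≤ Real.exp 50 := by have := Real.add_one_le_exp (50:ℝ); linarith
    have : (2601:ℝ) ≤ Real.exp 100 := by
      have : Real.exp 100 = Real.exp 50 * Real.exp 50 := by rw [← Real.exp_add]; norm_num
      nlinarith
    linarith
  have hla : (100:ℝ) ≤ Real.log a := by
    calc (100:ℝ) = Real.log (Real.exp 100) := (Real.log_exp _).symm
      _ ≤ Real.log a := Real.log_le_log (Real.exp_pos _) ha
  have hla16 : Real.log a ≤ a / 16 := log_le_div16 ha1024
  have ha0 : (0:ℝ) < a := by linarith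
  have hpi : Real.pi ≤ 4 := by linarith [Real.pi_le_four]
  -- L facts
  have hLre : L.re = a := Complex.log_re ζ
  have hLim : |L.im| < Real.pi / 2 := by
    rw [hLdef, Complex.log_im]
    exact Complex.abs_arg_lt_pi_div_two_iff.mpr (Or.inl hre)
  have habsL_low : a ≤ ‖L‖ := by
    calc a = L.re := hLre.symm
      _ ≤ |L.re| := le_abs_self _
      _ ≤ ‖L‖ := Complex.abs_re_le_norm L
  have habsL_up : ‖L‖ ≤ 2 * a := by
    calc ‖L‖ ≤ |L.re| + |L.im| := Complex.norm_le_abs_re_add_abs_im L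
      _ ≤ a + Real.pi / 2 := by
          rw [hLre, abs_of_nonneg ha0.le]; linarith [hLim.le]
      _ ≤ 2 * a := by linarith
  have hL0 : L ≠ 0 := by
    intro h
    rw [h] at habsL_low; simp at habsL_low; linarith
  have habsz0 : ‖z0‖ = A / ‖L‖ := by
    rw [hz0def, norm_div]
  have habsL_pos : 0 < ‖L‖ := by linarith
  have hz0abs_low : A / (2 * a) ≤ ‖z0‖ := by
    rw [habsz0]
    exact div_le_div_of_nonneg_left hA0.le habsL_pos habsL_up
  have hz0abs_up : ‖z0‖ ≤ A / a := by
    rw [habsz0]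
    exact div_le_div_of_nonneg_left hA0.le ha0 habsL_low
  have hz0pos : 0 < ‖z0‖ := by
    rw [habsz0]; positivity
  have hz0ne : z0 ≠ 0 := by
    intro h; rw [h] at hz0pos; simp at hz0pos
  have hz0re : 0 < z0.re := by
    rw [hz0def, Complex.div_re]
    have hnsq : 0 < Complex.normSq L := Complex.normSq_pos.mpr hL0
    have h1 : 0 < ζ.re * L.re := by rw [hLre]; positivity
    have h2 : 0 ≤ ζ.im * L.im := by
      have hLarg : L.im = Complex.arg ζ := Complex.log_im ζ
      rcases le_or_gt 0 ζ.im with h | h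
      · have : 0 ≤ Complex.arg ζ := Complex.arg_nonneg_iff.mpr h
        rw [hLarg]; positivity
      · have : Complex.arg ζ < 0 := Complex.arg_neg_iff.mpr h
        rw [hLarg]; nlinarith
    positivity
  -- epsilon and r facts
  have hla0 : (0:ℝ) < Real.log a := by linarith
  have hεpos : 0 < ε := by rw [hεdef]; positivity
  have hε12 : ε ≤ 1/2 := by
    rw [hεdef, div_le_iff₀ ha0]
    nlinarith
  have hrpos : 0 < r := by rw [hrdef]; positivity
  have hr2 : r ≤ ‖z0‖ / 2 := by
    rw [hrdef]; nlinarith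
  -- ball facts
  set s : Set ℂ := Metric.closedBall z0 r with hsdef
  have hball : ∀ w ∈ s, ‖w - z0‖ ≤ r := by
    intro w hw
    rw [hsdef, Metric.mem_closedBall, Complex.dist_eq] at hw
    exact hw
  have hw_lb : ∀ w ∈ s, ‖z0‖ / 2 ≤ ‖w‖ := by
    intro w hw
    have h1 := hball w hw
    have h2 : ‖z0‖ - ‖w‖ ≤ ‖w - z0‖ := by
      have h3 := norm_sub_norm_le z0 w
      rw [norm_sub_rev] at h3
      simpa using h3
    linarith
  have hw_ub : ∀ w ∈ s, ‖w‖ ≤ 2 * ‖z0‖ := by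
    intro w hw
    have h1 := hball w hw
    have h2 : ‖w‖ - ‖z0‖ ≤ ‖w - z0‖ := by
      have h3 := norm_sub_norm_le w z0
      simpa using h3
    linarith
  have hw_pos : ∀ w ∈ s, 0 < ‖w‖ := fun w hw => by
    have := hw_lb w hw; linarith
  have hw_ne : ∀ w ∈ s, w ≠ 0 := by
    intro w hw h
    have := hw_pos w hw
    rw [h, norm_zero] at this
    exact lt_irrefl _ this
  have hw_slit : ∀ w ∈ s, w ∈ Complex.slitPlane := by
    intro w hw
    rw [Complex.mem_slitPlane_iff]
    by_contra hcon
    push_neg at hcon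
    obtain ⟨hwre, hwim⟩ := hcon
    have h1 := hball w hw
    have h2 : Complex.normSq z0 ≤ Complex.normSq (w - z0) := by
      simp only [Complex.normSq_apply, Complex.sub_re, Complex.sub_im, hwim, zero_sub]
      nlinarith [hz0re, hwre, mul_nonneg (neg_nonneg.mpr hwre) hz0re.le]
    have h3 : ‖z0‖ ≤ ‖w - z0‖ := by
      rw [Complex.norm_def, Complex.norm_def]
      exact Real.sqrt_le_sqrt h2
    linarith [hball w hw]
  have hconv : Convex ℝ s := convex_closedBall _ _
  have hlip : ∀ w1 ∈ s, ∀ w2 ∈ s, ‖Complex.log w1 - Complex.log w2‖ ≤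
      2 / ‖z0‖ * ‖w1 - w2‖ := by
    intro w1 h1 w2 h2
    have key := Convex.norm_image_sub_le_of_norm_hasDerivWithin_le
      (f := Complex.log) (f' := fun x => x⁻¹) (C := 2 / ‖z0‖) (s := s)
      (fun x hx => (Complex.hasDerivAt_log (hw_slit x hx)).hasDerivWithinAt)
      (fun x hx => by
        rw [norm_inv]
        have hx1 := hw_lb x hx
        have hx2 : (0:ℝ) < ‖z0‖ / 2 := by linarith
        calc (‖x‖)⁻¹ ≤ (‖z0‖ / 2)⁻¹ := by
              apply inv_anti₀ hx2 hx1
          _ = 2 / ‖z0‖ := by rw [inv_div]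
        ) hconv h2 h1
    simpa using key
  -- lower bound on log |w| for w in the ball
  have hlogw_re : ∀ w ∈ s, a / 2 ≤ Real.log (‖w‖) := by
    intro w hw
    have h1 := hw_lb w hw
    have h2 : A / (4 * a) ≤ ‖w‖ := by
      have heq : A / (4 * a) = A / (2 * a) / 2 := by ring
      linarith [hz0abs_low]
    have h3 : Real.log (A / (4 * a)) ≤ Real.log (‖w‖) :=
      Real.log_le_log (by positivity) h2
    have h4 : Real.log (A / (4 * a)) = a - Real.log (4 * a) := by
      rw [Real.log_div (ne_of_gt hA0) (by positivity), hadef]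
    have h5 : Real.log (4 * a) = Real.log 4 + Real.log a := Real.log_mul (by norm_num) (ne_of_gt ha0)
    have h6 : Real.log 4 ≤ 3 := by
      have := Real.log_le_sub_one_of_pos (show (0:ℝ) < 4 by norm_num); linarith
    nlinarith
  have hlogw_abs : ∀ w ∈ s, a / 2 ≤ ‖Complex.log w‖ := by
    intro w hw
    calc a / 2 ≤ Real.log (‖w‖) := hlogw_re w hw
      _ = (Complex.log w).re := (Complex.log_re w).symm
      _ ≤ |(Complex.log w).re| := le_abs_self _
      _ ≤ ‖Complex.log w‖ := Complex.abs_re_le_norm _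
  -- |log z0 - L| bound
  have hlogabsL_nonneg : 0 ≤ Real.log (‖L‖) :=
    Real.log_nonneg (by linarith)
  have hlogabsL_up : Real.log (‖L‖) ≤ 2 * Real.log a := by
    have h1 : Real.log (‖L‖) ≤ Real.log (2 * a) :=
      Real.log_le_log habsL_pos habsL_up
    have h2 : Real.log (2 * a) = Real.log 2 + Real.log a :=
      Real.log_mul (by norm_num) (ne_of_gt ha0)
    have h3 : Real.log 2 ≤ 1 := by
      have := Real.log_le_sub_one_of_pos (show (0:ℝ) < 2 by norm_num); linarith
    linarith
  have hlogz0L : ‖Complex.log z0 - L‖ ≤ 3 * Real.log a := by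
    have hre0 : Real.log (‖z0‖) = a - Real.log (‖L‖) := by
      rw [habsz0, Real.log_div (ne_of_gt hA0) (ne_of_gt habsL_pos), ← hadef]
    have hre' : (Complex.log z0 - L).re = - Real.log (‖L‖) := by
      rw [Complex.sub_re, Complex.log_re, hLre, hre0]
      ring
    have him' : |(Complex.log z0 - L).im| ≤ Real.log a := by
      rw [Complex.sub_im, Complex.log_im, hLdef, Complex.log_im]
      have h1 := Complex.abs_arg_le_pi z0
      have h2 := Complex.abs_arg_le_pi ζ
      rw [abs_le] at h1 h2 ⊢
      constructor <;> nlinarith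
    calc ‖Complex.log z0 - L‖ ≤ |(Complex.log z0 - L).re| + |(Complex.log z0 - L).im| :=
          Complex.norm_le_abs_re_add_abs_im _
      _ ≤ 2 * Real.log a + Real.log a := by
          rw [hre', abs_neg, abs_of_nonneg hlogabsL_nonneg]
          linarith [him']
      _ = 3 * Real.log a := by ring
  have hz0mem : z0 ∈ s := Metric.mem_closedBall_self hrpos.le
  have hcenterlog : ∀ w ∈ s, ‖Complex.log w - L‖ ≤ 4 * Real.log a := by
    intro w hw
    have h1 : ‖Complex.log w - Complex.log z0‖ ≤ 2 * ε := by
      calc ‖Complex.log w - Complex.log z0‖ ≤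
            2 / ‖z0‖ * ‖w - z0‖ := hlip w hw z0 hz0mem
        _ ≤ 2 / ‖z0‖ * r := by
            apply mul_le_mul_of_nonneg_left (hball w hw) (by positivity)
        _ = 2 * ε := by rw [hrdef]; field_simp
    have h2 : ‖Complex.log w - L‖ ≤
        ‖Complex.log w - Complex.log z0‖ + ‖Complex.log z0 - L‖ := by
      have := norm_add_le (Complex.log w - Complex.log z0) (Complex.log z0 - L)
      simpa using this
    have h3 : 2 * ε ≤ 1 := by linarith
    nlinarith
  -- maps to
  have hlogne : ∀ w ∈ s, Complex.log w ≠ 0 := by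
    intro w hw h
    have := hlogw_abs w hw
    rw [h, norm_zero] at this
    linarith
  have hmaps : Set.MapsTo (fun w => ζ / Complex.log w) s s := by
    intro w hw
    rw [hsdef, Metric.mem_closedBall, Complex.dist_eq]
    have hid : ζ / Complex.log w - z0 = ζ * (L - Complex.log w) / (Complex.log w * L) := by
      rw [hz0def]
      field_simp [hlogne w hw, hL0]
    have habsLw : ‖L - Complex.log w‖ ≤ 4 * Real.log a := by
      rw [← norm_neg, neg_sub]
      exact hcenterlog w hw
    have hrr : r = A * (4 * Real.log a) / (a / 2 * ‖L‖) := by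
      rw [hrdef, habsz0, hεdef]
      field_simp
      ring
    calc ‖ζ / Complex.log w - z0‖
        = A * ‖L - Complex.log w‖ / (‖Complex.log w‖ * ‖L‖) := by
          rw [hid, norm_div, norm_mul, norm_mul]
      _ ≤ A * (4 * Real.log a) / (a / 2 * ‖L‖) := by
          apply div_le_div₀ (by positivity)
            (mul_le_mul_of_nonneg_left habsLw hA0.le) (by positivity)
          apply mul_le_mul_of_nonneg_right (hlogw_abs w hw) (by positivity)
      _ = r := hrr.symm
  -- contraction
  have hcontr : ∀ x ∈ s, ∀ y ∈ s,
      dist (ζ / Complex.log x) (ζ / Complex.log y) ≤ 1/2 * dist x y := by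
    intro x hx y hy
    rw [Complex.dist_eq, Complex.dist_eq]
    have hid : ζ / Complex.log x - ζ / Complex.log y
        = ζ * (Complex.log y - Complex.log x) / (Complex.log x * Complex.log y) := by
      field_simp [hlogne x hx, hlogne y hy]
    set D := ‖x - y‖ with hDdef
    have hD0 : 0 ≤ D := norm_nonneg _
    have hlxy : ‖Complex.log y - Complex.log x‖ ≤ 2 / ‖z0‖ * D := by
      have h := hlip y hy x hx
      rw [← norm_neg (y - x), neg_sub, ← hDdef] at h
      exact h
    have e3 : A * (2 / ‖z0‖) = 2 * ‖L‖ := by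
      rw [habsz0]
      field_simp
    calc ‖ζ / Complex.log x - ζ / Complex.log y‖
        = A * ‖Complex.log y - Complex.log x‖ /
            (‖Complex.log x‖ * ‖Complex.log y‖) := by
          rw [hid, norm_div, norm_mul, norm_mul]
      _ ≤ A * (2 / ‖z0‖ * D) / (a / 2 * (a / 2)) := by
          apply div_le_div₀ (by positivity)
            (mul_le_mul_of_nonneg_left hlxy hA0.le) (by positivity)
          exact mul_le_mul (hlogw_abs x hx) (hlogw_abs y hy) (by positivity) (by positivity)
      _ = 2 * ‖L‖ * D / (a / 2 * (a / 2)) := by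
          rw [← e3]; ring
      _ ≤ 1/2 * D := by
          rw [div_le_iff₀ (by positivity)]
          nlinarith [mul_le_mul_of_nonneg_right habsL_up hD0,
            mul_nonneg (mul_nonneg (by linarith : (0:ℝ) ≤ a - 32) ha0.le) hD0]
  -- Banach fixed point
  have hsc : IsComplete s := Metric.isClosed_closedBall.isComplete
  have hlipOn : LipschitzOnWith (1/2 : NNReal) (fun w => ζ / Complex.log w) s := by
    apply LipschitzOnWith.of_dist_le_mul
    intro x hx y hy
    have := hcontr x hx y hy
    rwa [show ((1/2 : NNReal) : ℝ) = 1/2 by norm_num]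
  have hcw : ContractingWith (1/2 : NNReal)
      (hmaps.restrict (fun w => ζ / Complex.log w) s s) :=
    ⟨by rw [← NNReal.coe_lt_coe]; norm_num, hlipOn.mapsToRestrict hmaps⟩
  obtain ⟨w, hws, hfix, -, -⟩ :=
    ContractingWith.exists_fixedPoint' hsc hmaps hcw hz0mem (edist_ne_top _ _)
  have hlwne : Complex.log w ≠ 0 := hlogne w hws
  have heqw : w * Complex.log w = ζ := by
    have hfix' : ζ / Complex.log w = w := hfix
    exact ((div_eq_iff hlwne).mp hfix').symm
  have hre2 : 2 ≤ (Complex.log w).re := by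
    rw [Complex.log_re]
    have := hlogw_re w hws
    linarith
  refine ⟨w, heqw, hre2, ?_⟩
  have := hball w hws
  rw [hrdef, hεdef] at this
  exact this



noncomputable def Wfun : ℂ → ℂ := fun ζ =>
  if h : Real.exp (Real.exp 100) ≤ ‖ζ‖ ∧ 0 < ζ.re then
    (exists_sol ζ h.1 h.2).choose
  else 1

/-- For `Re ζ > 0` and `|ζ|` large, `ν̃ log ν̃ = ζ` has a unique solution with
`Re ν̃ > 1` (equivalently `Re log ν̃ > 1`, `|Im log ν̃| < π/2`), and this solution
satisfies `ν̃ = (ζ/log ζ)(1 + O(log log |ζ| / log |ζ|))` as `Re ζ → ∞`. -/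
theorem lambert_solution_asymptotics :
    ∃ (W : ℂ → ℂ) (T : ℝ) (E : ℂ → ℂ),
      (∀ ζ : ℂ, T ≤ ‖ζ‖ → 0 < ζ.re →
        W ζ * Complex.log (W ζ) = ζ ∧
        1 < (W ζ).re ∧
        1 < (Complex.log (W ζ)).re ∧
        |(Complex.log (W ζ)).im| < Real.pi / 2 ∧
        (∀ w : ℂ, 1 < w.re → w * Complex.log w = ζ → w = W ζ)) ∧
      (∀ᶠ ζ in Filter.comap Complex.re Filter.atTop,
        W ζ = ζ / Complex.log ζ * (1 + E ζ)) ∧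
      E =O[Filter.comap Complex.re Filter.atTop]
        (fun ζ => Real.log (Real.log (‖ζ‖)) / Real.log (‖ζ‖)) := by
  set T : ℝ := Real.exp (Real.exp 100) with hTdef
  refine ⟨Wfun, T, fun ζ => Wfun ζ * Complex.log ζ / ζ - 1, ?_, ?_, ?_⟩
  · intro ζ hT hre
    have hmem : T ≤ ‖ζ‖ ∧ 0 < ζ.re := ⟨hT, hre⟩
    have hW : Wfun ζ = (exists_sol ζ hmem.1 hmem.2).choose := dif_pos hmem
    obtain ⟨heq, hre2, hballbd⟩ := (exists_sol ζ hmem.1 hmem.2).choose_spec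
    set w := (exists_sol ζ hmem.1 hmem.2).choose with hwdef
    have hw0 : w ≠ 0 := by
      intro h
      rw [h, zero_mul] at heq
      rw [← heq] at hre
      simp at hre
    obtain ⟨h1w, h1l, h2l⟩ := sol_props hw0 heq hre hre2
    rw [hW]
    exact ⟨heq, h1w, h1l, h2l, fun w' hw' heq' => f_inj hw' h1w (heq'.trans heq.symm)⟩
  · rw [Filter.eventually_comap]
    rw [Filter.eventually_atTop]
    refine ⟨max T 2, fun x hx ζ hζ => ?_⟩
    have hreζ : (2:ℝ) ≤ ζ.re := by rw [hζ]; exact le_trans (le_max_right _ _) hx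
    have hT : T ≤ ‖ζ‖ := by
      calc T ≤ max T 2 := le_max_left _ _
        _ ≤ x := hx
        _ = ζ.re := hζ.symm
        _ ≤ |ζ.re| := le_abs_self _
        _ ≤ ‖ζ‖ := Complex.abs_re_le_norm ζ
    have hre : 0 < ζ.re := by linarith
    have hζ0 : ζ ≠ 0 := by
      intro h; rw [h] at hre; simp at hre
    have hL0 : Complex.log ζ ≠ 0 := by
      intro h
      have h1 : (Complex.log ζ).re = Real.log (‖ζ‖) := Complex.log_re ζ
      rw [h] at h1
      have h2 : (1:ℝ) < ‖ζ‖ := by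
        calc (1:ℝ) < 2 := one_lt_two
          _ ≤ ζ.re := hreζ
          _ ≤ |ζ.re| := le_abs_self _
          _ ≤ ‖ζ‖ := Complex.abs_re_le_norm ζ
      have := Real.log_pos h2
      rw [← h1] at this
      simp at this
    field_simp
    ring
  · rw [Asymptotics.isBigO_iff]
    refine ⟨8, ?_⟩
    rw [Filter.eventually_comap, Filter.eventually_atTop]
    refine ⟨max T 2, fun x hx ζ hζ => ?_⟩
    have hreζ : (2:ℝ) ≤ ζ.re := by rw [hζ]; exact le_trans (le_max_right _ _) hx
    have hT : T ≤ ‖ζ‖ := by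
      calc T ≤ max T 2 := le_max_left _ _
        _ ≤ x := hx
        _ = ζ.re := hζ.symm
        _ ≤ |ζ.re| := le_abs_self _
        _ ≤ ‖ζ‖ := Complex.abs_re_le_norm ζ
    have hre : 0 < ζ.re := by linarith
    have hζ0 : ζ ≠ 0 := by
      intro h; rw [h] at hre; simp at hre
    set A := ‖ζ‖ with hAdef
    set a := Real.log A with hadef
    set L := Complex.log ζ with hLdef
    have hA0 : (0:ℝ) < A := lt_of_lt_of_le (Real.exp_pos _) hT
    have ha : Real.exp 100 ≤ a := by
      calc Real.exp 100 = Real.log (Real.exp (Real.exp 100)) := (Real.log_exp _).symm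
        _ ≤ a := Real.log_le_log (Real.exp_pos _) hT
    have ha0 : (0:ℝ) < a := by
      have := Real.add_one_le_exp (100:ℝ); linarith
    have hla0 : (0:ℝ) < Real.log a := by
      have : Real.log (Real.exp 100) ≤ Real.log a := Real.log_le_log (Real.exp_pos _) ha
      rw [Real.log_exp] at this
      linarith
    have hLre : L.re = a := Complex.log_re ζ
    have habsL_low : a ≤ ‖L‖ := by
      calc a = L.re := hLre.symm
        _ ≤ |L.re| := le_abs_self _
        _ ≤ ‖L‖ := Complex.abs_re_le_norm L
    have habsL_pos : (0:ℝ) < ‖L‖ := by linarith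
    have hL0 : L ≠ 0 := by
      intro h; rw [h] at habsL_pos; simp at habsL_pos
    have hmem : T ≤ ‖ζ‖ ∧ 0 < ζ.re := ⟨hT, hre⟩
    have hW : Wfun ζ = (exists_sol ζ hmem.1 hmem.2).choose := dif_pos hmem
    obtain ⟨heq, hre2, hballbd⟩ := (exists_sol ζ hmem.1 hmem.2).choose_spec
    set w := (exists_sol ζ hmem.1 hmem.2).choose with hwdef
    have hE : Wfun ζ * L / ζ - 1 = (w - ζ / L) * (L / ζ) := by
      rw [hW]
      field_simp
    rw [hE]
    have habsdiv : ‖ζ / L‖ = A / ‖L‖ := norm_div _ _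
    have hnorm : ‖(w - ζ / L) * (L / ζ)‖
        = ‖w - ζ / L‖ * (‖L‖ / A) := by
      rw [norm_mul, norm_div]
    rw [hnorm]
    have hb : ‖w - ζ / L‖ * (‖L‖ / A)
        ≤ A / ‖L‖ * (8 * Real.log a / a) * (‖L‖ / A) := by
      apply mul_le_mul_of_nonneg_right _ (by positivity)
      calc ‖w - ζ / L‖ ≤ ‖ζ / L‖ * (8 * Real.log a / a) := hballbd
        _ = A / ‖L‖ * (8 * Real.log a / a) := by rw [habsdiv]
    have hc : A / ‖L‖ * (8 * Real.log a / a) * (‖L‖ / A)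
        = 8 * (Real.log a / a) := by
      field_simp
    have hd : ‖Real.log a / a‖ = Real.log a / a := by
      rw [Real.norm_eq_abs, abs_of_pos (by positivity)]
    rw [hd]
    calc ‖w - ζ / L‖ * (‖L‖ / A)
        ≤ A / ‖L‖ * (8 * Real.log a / a) * (‖L‖ / A) := hb
      _ = 8 * (Real.log a / a) := hc
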